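/- Let a > b ≥ 2 be coprime integers, let D ∈ ℤ[X] be the unique polynomial with (X^a − 1)·(X^b − 1)·D = (X^{ab} − 1)·(X − 1), and let Q ∈ ℤ[X] be monic of degree n ≥ 1 with coefficient of X^{n−1} equal to −1. Suppose k and w are positive integers with a·b = k·w², and set P = D·Q(X^w). Then it is NOT the case that every coefficient of P lies in {−1, 0, 1} and the nonzero coefficients of P alternate in sign. -/

import Mathlib

open Polynomial

/-- The nonzero coefficients of `P ∈ ℤ[X]` alternate in sign: whenever `i < j`, the
coefficients of `X^i` and `X^j` are nonzero, and all coefficients strictly in between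
vanish, then the two coefficients have opposite signs. -/
def AlternatesInSign (P : Polynomial ℤ) : Prop :=
  ∀ i j : ℕ, i < j → P.coeff i ≠ 0 → P.coeff j ≠ 0 →
    (∀ k : ℕ, i < k → k < j → P.coeff k = 0) → P.coeff i * P.coeff j < 0

namespace Stmt9Aux

open Finset


/-- membership in the numerical semigroup generated by `a` and `b` -/
def SG (a b m : ℕ) : Prop := ∃ x y : ℕ, m = x * a + y * b

open scoped Classical in
noncomputable def chi (a b m : ℕ) : ℤ := if SG a b m then 1 else 0

lemma chi_of (a b m : ℕ) (h : SG a b m) : chi a b m = 1 := by simp [chi, h]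
lemma chi_of_not (a b m : ℕ) (h : ¬ SG a b m) : chi a b m = 0 := by simp [chi, h]

lemma sg_zero (a b : ℕ) : SG a b 0 := ⟨0, 0, by simp⟩

lemma sg_add (a b m : ℕ) (x y : ℕ) (h : SG a b m) : SG a b (m + x * a + y * b) := by
  obtain ⟨u, v, rfl⟩ := h; exact ⟨u + x, v + y, by ring⟩

variable {a b : ℕ}

lemma exists_inv (ha : 0 < a) (hcop : Nat.Coprime a b) (m : ℕ) :
    ∃ y, y < a ∧ m ≡ y * b [MOD a] := by
  haveI : NeZero a := ⟨ha.ne'⟩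
  have hbu : IsUnit (b : ZMod a) := (ZMod.isUnit_iff_coprime b a).2 hcop.symm
  refine ⟨((m : ZMod a) * (b : ZMod a)⁻¹).val, ZMod.val_lt _, ?_⟩
  rw [← ZMod.natCast_eq_natCast_iff]
  push_cast
  rw [ZMod.natCast_val, ZMod.cast_id, mul_assoc, ZMod.inv_mul_of_unit _ hbu, mul_one]

/-- every `m` with `m + a + b ≥ ab + 1` is in the semigroup -/
lemma sg_large (hb : 2 ≤ b) (hba : b < a) (hcop : Nat.Coprime a b) (m : ℕ)
    (hm : a * b + 1 ≤ m + a + b) : SG a b m := by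
  obtain ⟨y, hy, hmod⟩ := exists_inv (by omega) hcop m
  have hyb : y * b + b ≤ a * b := by
    have h1 : (y + 1) * b ≤ a * b := Nat.mul_le_mul_right b (by omega)
    have h2 : (y + 1) * b = y * b + b := by ring
    omega
  rcases le_or_gt (y * b) m with hle | hlt
  · obtain ⟨x, hx⟩ := (Nat.modEq_iff_dvd' hle).1 hmod.symm
    refine ⟨x, y, ?_⟩
    have h4 : x * a = a * x := by ring
    omega
  · obtain ⟨x, hx⟩ := (Nat.modEq_iff_dvd' hlt.le).1 hmod
    have hx1 : x ≠ 0 := by rintro rfl; omega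
    have h3 : a ≤ x * a := by
      calc a = 1 * a := (one_mul a).symm
      _ ≤ x * a := Nat.mul_le_mul_right a (by omega)
    have h4 : x * a = a * x := by ring
    omega

lemma sg_not_F (hb : 2 ≤ b) (hba : b < a) (hcop : Nat.Coprime a b) :
    ¬ SG a b (a * b - a - b) := by
  rintro ⟨x, y, hxy⟩
  have hab : a + b ≤ a * b := by nlinarith
  have heq : a * b = (x + 1) * a + (y + 1) * b := by
    have h1 : (x+1) * a = x*a + a := by ring
    have h2 : (y+1) * b = y*b + b := by ring
    omega
  have hdvd : a ∣ (y + 1) * b := by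
    have h4 : (y + 1) * b = a * b - (x + 1) * a := by omega
    rw [h4]
    exact Nat.dvd_sub (Dvd.intro b rfl) (Dvd.intro_left _ rfl)
  have hya : a ∣ y + 1 := hcop.dvd_of_dvd_mul_right hdvd
  have : a ≤ y + 1 := Nat.le_of_dvd (by omega) hya
  have : a * b ≤ (y + 1) * b := Nat.mul_le_mul_right b this
  have : 0 < (x + 1) * a := Nat.mul_pos (by omega) (by omega)
  omega

lemma sg_small (hba : b < a) (m : ℕ) (h : SG a b m) (hm : m < a) : b ∣ m := by
  obtain ⟨x, y, rfl⟩ := h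
  rcases Nat.eq_zero_or_pos x with rfl | hx
  · simp [Nat.dvd_mul_left]
  · have : a ≤ x * a := Nat.le_mul_of_pos_left a hx
    omega

lemma sg_step (m : ℕ) (h : SG a b m) (hm : m ≠ 0) :
    (a ≤ m ∧ SG a b (m - a)) ∨ (b ≤ m ∧ SG a b (m - b)) := by
  obtain ⟨x, y, rfl⟩ := h
  rcases Nat.eq_zero_or_pos x with rfl | hx
  · rcases Nat.eq_zero_or_pos y with rfl | hy
    · simp at hm
    · right
      obtain ⟨y', rfl⟩ : ∃ y', y = y' + 1 := ⟨y - 1, by omega⟩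
      have h1 : (y'+1) * b = y'*b + b := by ring
      constructor
      · omega
      · exact ⟨0, y', by omega⟩
  · left
    obtain ⟨x', rfl⟩ : ∃ x', x = x' + 1 := ⟨x - 1, by omega⟩
    have h1 : (x'+1) * a = x'*a + a := by ring
    constructor
    · omega
    · exact ⟨x', y, by omega⟩

lemma sg_three (hb : 2 ≤ b) (hba : b < a) (hcop : Nat.Coprime a b) (t : ℕ)
    (h1 : a + b ≤ t) (h2 : t < a * b)
    (hA : SG a b (t - a)) (hB : SG a b (t - b)) : SG a b (t - a - b) := by
  obtain ⟨x₁, y₁, hxy₁⟩ := hA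
  rcases Nat.eq_zero_or_pos y₁ with rfl | hy₁
  swap
  · obtain ⟨y₁', rfl⟩ : ∃ y', y₁ = y' + 1 := ⟨y₁ - 1, by omega⟩
    have h3 : (y₁'+1) * b = y₁'*b + b := by ring
    exact ⟨x₁, y₁', by omega⟩
  obtain ⟨x₂, y₂, hxy₂⟩ := hB
  rcases Nat.eq_zero_or_pos x₂ with rfl | hx₂
  swap
  · obtain ⟨x₂', rfl⟩ : ∃ x', x₂ = x' + 1 := ⟨x₂ - 1, by omega⟩
    have h3 : (x₂'+1) * a = x₂'*a + a := by ring
    exact ⟨x₂', y₂, by omega⟩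
  -- t = (x₁+1) a = (y₂+1) b, so ab ∣ t, contradiction with 0 < t < ab
  exfalso
  simp only [Nat.zero_mul, Nat.add_zero, Nat.zero_add] at hxy₁ hxy₂
  have hta : a ∣ t := by
    refine ⟨x₁ + 1, ?_⟩
    have h5 : a * (x₁ + 1) = x₁ * a + a := by ring
    omega
  have htb : b ∣ t := by
    refine ⟨y₂ + 1, ?_⟩
    have h5 : b * (y₂ + 1) = y₂ * b + b := by ring
    omega
  have : a * b ∣ t := Nat.Coprime.mul_dvd_of_dvd_of_dvd hcop hta htb
  have := Nat.le_of_dvd (by omega) this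
  omega

lemma sg_add_a (m : ℕ) (h : SG a b m) : SG a b (m + a) := by
  have h1 := sg_add a b m 1 0 h
  have h2 : m + 1 * a + 0 * b = m + a := by ring
  rwa [h2] at h1

lemma sg_add_b (m : ℕ) (h : SG a b m) : SG a b (m + b) := by
  have h1 := sg_add a b m 0 1 h
  have h2 : m + 0 * a + 1 * b = m + b := by ring
  rwa [h2] at h1

lemma sg_sub_b (hb : 2 ≤ b) (hba : b < a) (t : ℕ) (ht : b ≤ t) (hta : t < a)
    (h : SG a b t) : SG a b (t - b) := by
  obtain ⟨y, hy⟩ := sg_small hba t h hta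
  rcases Nat.eq_zero_or_pos y with rfl | hy1
  · simp at hy; omega
  refine ⟨0, y - 1, ?_⟩
  have h1 : (y - 1) * b = y * b - b := by
    have := Nat.sub_mul y 1 b; simpa using this
  have h2 : y * b = b * y := by ring
  omega

lemma chi_rec (hb : 2 ≤ b) (hba : b < a) (hcop : Nat.Coprime a b) (t : ℕ) :
    chi a b t + (if a + b ≤ t then chi a b (t - a - b) else 0)
      + (if a * b ≤ t then 1 else 0) + (if 1 ≤ t then 1 else 0)
    = (if a ≤ t then chi a b (t - a) else 0) + (if b ≤ t then chi a b (t - b) else 0)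
      + (if a * b + 1 ≤ t then 1 else 0) + 1 := by
  have hab : a + b + 1 ≤ a * b := by nlinarith
  by_cases h0 : t = 0
  · subst h0
    rw [if_neg (by omega), if_neg (by omega), if_neg (by omega), if_neg (by omega),
      if_neg (by omega), if_neg (by omega), chi_of _ _ _ (sg_zero a b)]
    norm_num
  by_cases h2 : t < b
  · rw [if_neg (by omega), if_neg (by omega), if_pos (by omega), if_neg (by omega),
      if_neg (by omega), if_neg (by omega), chi_of_not]
    intro h
    have hd := sg_small hba t h (by omega)
    have := Nat.le_of_dvd (by omega) hd
    omega
  by_cases h3 : t < a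
  · rw [if_neg (by omega), if_neg (by omega), if_pos (by omega), if_neg (by omega),
      if_pos (by omega), if_neg (by omega)]
    by_cases hS : SG a b (t - b)
    · have h4 := sg_add_b _ hS
      have h5 : t - b + b = t := by omega
      rw [h5] at h4
      rw [chi_of _ _ _ h4, chi_of _ _ _ hS]
      norm_num
    · rw [chi_of_not _ _ _ hS, chi_of_not]
      intro h
      exact hS (sg_sub_b hb hba t (by omega) h3 h)
  by_cases h4 : t < a + b
  · rw [if_neg (by omega), if_neg (by omega), if_pos (by omega), if_pos (by omega),
      if_pos (by omega), if_neg (by omega)]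
    by_cases hA : SG a b (t - a) <;> by_cases hB : SG a b (t - b)
    · exfalso
      have hta : t = a := by
        by_contra hne
        have hd := sg_small hba (t - a) hA (by omega)
        have := Nat.le_of_dvd (by omega) hd
        omega
      have hd : b ∣ t - b := sg_small hba _ hB (by omega)
      have hdb : b ∣ a := by
        have h5 : t - b + b = t := by omega
        have h6 := Nat.dvd_add hd (dvd_refl b)
        rw [h5, hta] at h6
        exact h6
      have h7 : b ∣ Nat.gcd a b := Nat.dvd_gcd hdb (dvd_refl b)
      rw [hcop] at h7
      have := Nat.le_of_dvd (by omega) h7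
      omega
    · have h5 := sg_add_a _ hA
      have h6 : t - a + a = t := by omega
      rw [h6] at h5
      rw [chi_of _ _ _ h5, chi_of _ _ _ hA, chi_of_not _ _ _ hB]
    · have h5 := sg_add_b _ hB
      have h6 : t - b + b = t := by omega
      rw [h6] at h5
      rw [chi_of _ _ _ h5, chi_of _ _ _ hB, chi_of_not _ _ _ hA]
      norm_num
    · rw [chi_of_not _ _ _ hA, chi_of_not _ _ _ hB, chi_of_not]
      intro h
      rcases sg_step t h h0 with ⟨_, h6⟩ | ⟨_, h6⟩
      exacts [hA h6, hB h6]
  by_cases h5 : t < a * b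
  · rw [if_pos (by omega), if_neg (by omega), if_pos (by omega), if_pos (by omega),
      if_pos (by omega), if_neg (by omega)]
    by_cases hD : SG a b (t - a - b)
    · have hA : SG a b (t - a) := by
        have := sg_add_b _ hD
        have h6 : t - a - b + b = t - a := by omega
        rwa [h6] at this
      have hB : SG a b (t - b) := by
        have := sg_add_a _ hD
        have h6 : t - a - b + a = t - b := by omega
        rwa [h6] at this
      have hT : SG a b t := by
        have := sg_add_a _ hA
        have h6 : t - a + a = t := by omega
        rwa [h6] at this
      rw [chi_of _ _ _ hD, chi_of _ _ _ hA, chi_of _ _ _ hB, chi_of _ _ _ hT]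
    by_cases hA : SG a b (t - a) <;> by_cases hB : SG a b (t - b)
    · exact absurd (sg_three hb hba hcop t (by omega) h5 hA hB) hD
    · have h6 := sg_add_a _ hA
      have h7 : t - a + a = t := by omega
      rw [h7] at h6
      rw [chi_of _ _ _ h6, chi_of _ _ _ hA, chi_of_not _ _ _ hB, chi_of_not _ _ _ hD]
    · have h6 := sg_add_b _ hB
      have h7 : t - b + b = t := by omega
      rw [h7] at h6
      rw [chi_of _ _ _ h6, chi_of _ _ _ hB, chi_of_not _ _ _ hA, chi_of_not _ _ _ hD]
      norm_num
    · rw [chi_of_not _ _ _ hA, chi_of_not _ _ _ hB, chi_of_not _ _ _ hD, chi_of_not]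
      intro h
      rcases sg_step t h h0 with ⟨_, h6⟩ | ⟨_, h6⟩
      exacts [hA h6, hB h6]
  by_cases h6 : t = a * b
  · subst h6
    rw [if_pos (by omega), if_pos (by omega), if_pos (by omega), if_pos (by omega),
      if_pos (by omega), if_neg (by omega)]
    have c1 : chi a b (a * b) = 1 := by
      refine chi_of _ _ _ ⟨b, 0, ?_⟩
      have : b * a = a * b := by ring
      omega
    have c2 : chi a b (a * b - a - b) = 0 := chi_of_not _ _ _ (sg_not_F hb hba hcop)
    have c3 : chi a b (a * b - a) = 1 := by
      refine chi_of _ _ _ ⟨b - 1, 0, ?_⟩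
      have h7 : (b - 1) * a = b * a - a := by
        have := Nat.sub_mul b 1 a; simpa using this
      have h8 : b * a = a * b := by ring
      omega
    have c4 : chi a b (a * b - b) = 1 := by
      refine chi_of _ _ _ ⟨0, a - 1, ?_⟩
      have h7 : (a - 1) * b = a * b - b := by
        have := Nat.sub_mul a 1 b; simpa using this
      omega
    rw [c1, c2, c3, c4]
    norm_num
  · rw [if_pos (by omega), if_pos (by omega), if_pos (by omega), if_pos (by omega),
      if_pos (by omega), if_pos (by omega)]
    have hD : SG a b (t - a - b) := sg_large hb hba hcop _ (by omega)
    have hA : SG a b (t - a) := by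
      have := sg_add_b _ hD
      have h7 : t - a - b + b = t - a := by omega
      rwa [h7] at this
    have hB : SG a b (t - b) := by
      have := sg_add_a _ hD
      have h7 : t - a - b + a = t - b := by omega
      rwa [h7] at this
    have hT : SG a b t := by
      have := sg_add_a _ hA
      have h7 : t - a + a = t := by omega
      rwa [h7] at this
    rw [chi_of _ _ _ hD, chi_of _ _ _ hA, chi_of _ _ _ hB, chi_of _ _ _ hT]

lemma sum_shift (f : ℕ → ℤ) (e m : ℕ) :
    ∑ j ∈ range (m + 1), (if e ≤ j then f (j - e) else 0)
      = if e ≤ m then ∑ j ∈ range (m + 1 - e), f j else 0 := by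
  rcases le_or_gt e m with h | h
  · rw [if_pos h, Finset.range_eq_Ico,
      ← Finset.sum_Ico_consecutive _ (Nat.zero_le e) (by omega : e ≤ m + 1)]
    have h1 : ∑ j ∈ Finset.Ico 0 e, (if e ≤ j then f (j - e) else 0) = 0 := by
      apply Finset.sum_eq_zero
      intro j hj
      rw [Finset.mem_Ico] at hj
      rw [if_neg (by omega)]
    rw [h1, zero_add, Finset.sum_Ico_eq_sum_range]
    apply Finset.sum_congr rfl
    intro j hj
    rw [if_pos (by omega)]
    congr 1
    omega
  · rw [if_neg (by omega)]
    apply Finset.sum_eq_zero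
    intro j hj
    rw [Finset.mem_range] at hj
    rw [if_neg (by omega)]

lemma hsXD (D : Polynomial ℤ) (e t : ℕ) :
    ∑ j ∈ range (t + 1), (X ^ e * D).coeff j
      = if e ≤ t then ∑ j ∈ range (t + 1 - e), D.coeff j else 0 := by
  have h1 : ∀ j, (X ^ e * D).coeff j = if e ≤ j then D.coeff (j - e) else 0 := by
    intro j
    rw [mul_comm, Polynomial.coeff_mul_X_pow']
  simp_rw [h1]
  exact sum_shift _ _ _

lemma hsX (e t : ℕ) :
    ∑ j ∈ range (t + 1), ((X : Polynomial ℤ) ^ e).coeff j = if e ≤ t then 1 else 0 := by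
  simp_rw [Polynomial.coeff_X_pow]
  rw [Finset.sum_ite_eq' (range (t + 1)) e (fun _ => (1 : ℤ))]
  simp [Nat.lt_succ_iff]

lemma SD_eq_chi (hb : 2 ≤ b) (hba : b < a) (hcop : Nat.Coprime a b) (D : Polynomial ℤ)
    (hD : (X ^ a - 1) * (X ^ b - 1) * D = (X ^ (a * b) - 1) * (X - 1)) (t : ℕ) :
    ∑ j ∈ range (t + 1), D.coeff j = chi a b t := by
  induction t using Nat.strong_induction_on with
  | _ t IH =>
  have hD' : X ^ (a + b) * D + D + X ^ (a * b) + X ^ 1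
      = X ^ a * D + X ^ b * D + X ^ (a * b + 1) + X ^ 0 := by
    have h0 : (X : Polynomial ℤ) ^ 1 = X := pow_one X
    have h1 : (X : Polynomial ℤ) ^ 0 = 1 := pow_zero X
    rw [h0, h1]
    linear_combination hD
  have hsum := congrArg (fun p : Polynomial ℤ => ∑ j ∈ range (t + 1), p.coeff j) hD'
  simp only [Polynomial.coeff_add, Finset.sum_add_distrib, hsXD, hsX] at hsum
  rw [if_pos (Nat.zero_le t)] at hsum
  have h2 := chi_rec hb hba hcop t
  by_cases hA : a ≤ t <;> by_cases hB : b ≤ t <;> by_cases hAB : a + b ≤ t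
  · rw [if_pos hA, if_pos hB, if_pos hAB] at hsum
    rw [if_pos hA, if_pos hB, if_pos hAB] at h2
    rw [show t + 1 - (a + b) = (t - (a + b)) + 1 by omega,
      show t + 1 - a = (t - a) + 1 by omega, show t + 1 - b = (t - b) + 1 by omega,
      IH (t - (a + b)) (by omega), IH (t - a) (by omega), IH (t - b) (by omega),
      show t - (a + b) = t - a - b by omega] at hsum
    linarith
  · rw [if_pos hA, if_pos hB, if_neg hAB] at hsum
    rw [if_pos hA, if_pos hB, if_neg hAB] at h2
    rw [show t + 1 - a = (t - a) + 1 by omega, show t + 1 - b = (t - b) + 1 by omega,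
      IH (t - a) (by omega), IH (t - b) (by omega)] at hsum
    linarith
  · omega
  · rw [if_pos hA, if_neg hB, if_neg hAB] at hsum
    rw [if_pos hA, if_neg hB, if_neg hAB] at h2
    rw [show t + 1 - a = (t - a) + 1 by omega, IH (t - a) (by omega)] at hsum
    linarith
  · omega
  · rw [if_neg hA, if_pos hB, if_neg hAB] at hsum
    rw [if_neg hA, if_pos hB, if_neg hAB] at h2
    rw [show t + 1 - b = (t - b) + 1 by omega, IH (t - b) (by omega)] at hsum
    linarith
  · omega
  · rw [if_neg hA, if_neg hB, if_neg hAB] at hsum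
    rw [if_neg hA, if_neg hB, if_neg hAB] at h2
    linarith

lemma Hform (D Q : Polynomial ℤ) (n w : ℕ) (hQdeg : Q.natDegree = n) (m : ℕ)
    (hm : n * w ≤ m) :
    ∑ j ∈ range (m + 1), (D * Q.comp (X ^ w)).coeff j
      = ∑ i ∈ range (n + 1), Q.coeff i * (∑ j ∈ range (m + 1 - i * w), D.coeff j) := by
  have hQ1 : Q = ∑ i ∈ range (n + 1), (monomial i) (Q.coeff i) :=
    Q.as_sum_range' (n + 1) (by omega)
  have hcomp : Q.comp (X ^ w) = ∑ i ∈ range (n + 1), Polynomial.C (Q.coeff i) * X ^ (i * w) := by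
    conv_lhs => rw [hQ1]
    rw [Polynomial.comp, Polynomial.eval₂_finset_sum]
    apply Finset.sum_congr rfl
    intro i _
    rw [Polynomial.eval₂_monomial, ← pow_mul, Nat.mul_comm w i]
  calc ∑ j ∈ range (m + 1), (D * Q.comp (X ^ w)).coeff j
      = ∑ j ∈ range (m + 1), ∑ i ∈ range (n + 1),
          Q.coeff i * (if i * w ≤ j then D.coeff (j - i * w) else 0) := by
        apply Finset.sum_congr rfl
        intro j _
        rw [hcomp, Finset.mul_sum, Polynomial.finset_sum_coeff]
        apply Finset.sum_congr rfl
        intro i _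
        rw [show D * (Polynomial.C (Q.coeff i) * X ^ (i * w))
            = Polynomial.C (Q.coeff i) * (D * X ^ (i * w)) by ring,
          Polynomial.coeff_C_mul, Polynomial.coeff_mul_X_pow']
    _ = ∑ i ∈ range (n + 1), ∑ j ∈ range (m + 1),
          Q.coeff i * (if i * w ≤ j then D.coeff (j - i * w) else 0) := Finset.sum_comm
    _ = ∑ i ∈ range (n + 1), Q.coeff i * (∑ j ∈ range (m + 1 - i * w), D.coeff j) := by
        apply Finset.sum_congr rfl
        intro i hi
        rw [Finset.mem_range] at hi
        have hiw : i * w ≤ m := by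
          have h1 : i * w ≤ n * w := Nat.mul_le_mul_right w (by omega)
          omega
        rw [← Finset.mul_sum, sum_shift (fun j => D.coeff j) (i * w) m, if_pos hiw]

lemma tail01 (P : Polynomial ℤ) (hc : ∀ j, P.coeff j ∈ ({-1, 0, 1} : Set ℤ))
    (halt : AlternatesInSign P) (hlc : P.coeff P.natDegree = 1) :
    ∀ i, i ≤ P.natDegree →
      ∃ j, j ≤ i ∧ P.coeff (P.natDegree - j) ≠ 0 ∧
        (∀ l, j < l → l ≤ i → P.coeff (P.natDegree - l) = 0) ∧
        (∑ r ∈ range (i + 1), P.coeff (P.natDegree - r))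
          = (if P.coeff (P.natDegree - j) = 1 then 1 else 0) := by
  intro i
  induction i with
  | zero =>
    intro _
    refine ⟨0, le_refl _, ?_, ?_, ?_⟩
    · simp [hlc]
    · intro l h1 h2; omega
    · simp [hlc]
  | succ i ih =>
    intro hi
    obtain ⟨j, hj, hnz, hzero, hsum⟩ := ih (by omega)
    by_cases hnew : P.coeff (P.natDegree - (i + 1)) = 0
    · refine ⟨j, by omega, hnz, ?_, ?_⟩
      · intro l hl1 hl2
        rcases Nat.lt_or_ge l (i + 1) with h | h
        · exact hzero l hl1 (by omega)
        · have : l = i + 1 := by omega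
          rwa [this]
      · rw [Finset.sum_range_succ, hnew, add_zero, hsum]
    · refine ⟨i + 1, le_refl _, hnew, by intro l h1 h2; omega, ?_⟩
      have hlt : P.natDegree - (i + 1) < P.natDegree - j := by omega
      have hmid : ∀ kk, P.natDegree - (i + 1) < kk → kk < P.natDegree - j → P.coeff kk = 0 := by
        intro kk hk1 hk2
        have h3 := hzero (P.natDegree - kk) (by omega) (by omega)
        rwa [show P.natDegree - (P.natDegree - kk) = kk by omega] at h3
      have hprod := halt _ _ hlt hnew hnz hmid
      have h1 := hc (P.natDegree - (i + 1))
      have h2 := hc (P.natDegree - j)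
      simp only [Set.mem_insert_iff, Set.mem_singleton_iff] at h1 h2
      rw [Finset.sum_range_succ, hsum]
      rcases h1 with h1 | h1 | h1 <;> rcases h2 with h2 | h2 | h2 <;>
        first
          | (exact absurd h2 hnz)
          | (exact absurd h1 hnew)
          | (rw [h1, h2]; norm_num; done)
          | (rw [h1, h2] at hprod; exact absurd hprod (by norm_num))

end Stmt9Aux

set_option maxHeartbeats 1000000 in
open Stmt9Aux Finset in
/-- If `a·b = k·w²` with `k, w` positive, then `P = D·Q(X^w)` cannot have all its
coefficients in `{−1,0,1}` with nonzero coefficients alternating in sign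
(Proposition 3.1 of the paper). -/
theorem stmt_9 (a b : ℕ) (hb : 2 ≤ b) (hba : b < a) (hcop : Nat.Coprime a b)
    (D : Polynomial ℤ)
    (hD : (X ^ a - 1) * (X ^ b - 1) * D = (X ^ (a * b) - 1) * (X - 1))
    (Q : Polynomial ℤ) (n : ℕ) (hn : 1 ≤ n)
    (hQmon : Q.Monic) (hQdeg : Q.natDegree = n) (hQ : Q.coeff (n - 1) = -1)
    (k w : ℕ) (hk : 0 < k) (hw : 0 < w) (hab : a * b = k * w ^ 2) :
    ¬ ((∀ j : ℕ, (D * Q.comp (X ^ w)).coeff j ∈ ({-1, 0, 1} : Set ℤ)) ∧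
        AlternatesInSign (D * Q.comp (X ^ w))) := by
  rintro ⟨hcoeff, halt⟩
  set P := D * Q.comp (X ^ w) with hP
  have hfab : a + b + 1 ≤ a * b := by nlinarith
  -- monicity and degree facts
  have hMa : (X ^ a - 1 : Polynomial ℤ).Monic := by
    have := Polynomial.monic_X_pow_sub_C (1 : ℤ) (n := a) (by omega)
    simpa using this
  have hMb : (X ^ b - 1 : Polynomial ℤ).Monic := by
    have := Polynomial.monic_X_pow_sub_C (1 : ℤ) (n := b) (by omega)
    simpa using this
  have hMab : (X ^ (a * b) - 1 : Polynomial ℤ).Monic := by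
    have := Polynomial.monic_X_pow_sub_C (1 : ℤ) (n := a * b) (Nat.mul_ne_zero (by omega) (by omega))
    simpa using this
  have hMX : (X - 1 : Polynomial ℤ).Monic := by
    have := Polynomial.monic_X_sub_C (1 : ℤ)
    simpa using this
  have hRHSm : ((X ^ (a * b) - 1) * (X - 1) : Polynomial ℤ).Monic := hMab.mul hMX
  have hDne : D ≠ 0 := by
    intro h
    rw [h, mul_zero] at hD
    exact hRHSm.ne_zero hD.symm
  have hDmon : D.leadingCoeff = 1 := by
    have h1 := congrArg Polynomial.leadingCoeff hD
    rw [Polynomial.leadingCoeff_mul, Polynomial.leadingCoeff_mul,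
      hMa.leadingCoeff, hMb.leadingCoeff, hRHSm.leadingCoeff, one_mul, one_mul] at h1
    exact h1
  have hdXa : (X ^ a - 1 : Polynomial ℤ).natDegree = a := by
    have := Polynomial.natDegree_X_pow_sub_C (n := a) (r := (1 : ℤ))
    simpa using this
  have hdXb : (X ^ b - 1 : Polynomial ℤ).natDegree = b := by
    have := Polynomial.natDegree_X_pow_sub_C (n := b) (r := (1 : ℤ))
    simpa using this
  have hdXab : (X ^ (a * b) - 1 : Polynomial ℤ).natDegree = a * b := by
    have := Polynomial.natDegree_X_pow_sub_C (n := a * b) (r := (1 : ℤ))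
    simpa using this
  have hdX : (X - 1 : Polynomial ℤ).natDegree = 1 := by
    have := Polynomial.natDegree_X_sub_C (1 : ℤ)
    simpa using this
  have hDdeg : D.natDegree = a * b + 1 - (a + b) := by
    have h1 := congrArg Polynomial.natDegree hD
    rw [Polynomial.natDegree_mul (mul_ne_zero hMa.ne_zero hMb.ne_zero) hDne,
      Polynomial.natDegree_mul hMa.ne_zero hMb.ne_zero,
      Polynomial.natDegree_mul hMab.ne_zero hMX.ne_zero,
      hdXa, hdXb, hdXab, hdX] at h1
    omega
  -- facts about w
  have hw2 : w * w ≤ a * b := by nlinarith [sq w]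
  have hwa : w < a := by
    have h1 : w * w < a * a := by nlinarith
    exact Nat.mul_self_lt_mul_self_iff.mp h1
  have hwS : ¬ SG a b w := by
    rintro ⟨x, y, hxy⟩
    rcases Nat.eq_zero_or_pos x with rfl | hx
    · rcases Nat.eq_zero_or_pos y with rfl | hy
      · simp at hxy; omega
      · -- w = y*b, so b ∣ a, contradiction with coprimality
        have hyb : w = y * b := by simpa using hxy
        have h1 : a * b = (k * y * y * b) * b := by
          rw [hab, hyb]; ring
        have h2 : a = k * y * y * b := Nat.eq_of_mul_eq_mul_right (by omega) h1
        have hdvd : b ∣ a := ⟨k * y * y, by rw [h2]; ring⟩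
        have h3 : b ∣ Nat.gcd a b := Nat.dvd_gcd hdvd (dvd_refl b)
        rw [hcop] at h3
        have := Nat.le_of_dvd (by omega) h3
        omega
    · have h1 : a ≤ x * a := by
        calc a = 1 * a := (one_mul a).symm
        _ ≤ x * a := Nat.mul_le_mul_right a (by omega)
      omega
  have hwF : w ≤ a * b - a - b := by
    by_contra h
    exact hwS (sg_large hb hba hcop w (by omega))
  have hFwS : SG a b (a * b - a - b - w) := by
    obtain ⟨y, hy, hmod⟩ := exists_inv (by omega) hcop w
    rcases le_or_gt (y * b) w with hle | hlt
    · exfalso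
      obtain ⟨x, hx⟩ := (Nat.modEq_iff_dvd' hle).1 hmod.symm
      refine hwS ⟨x, y, ?_⟩
      have h1 : x * a = a * x := by ring
      omega
    · obtain ⟨x, hx⟩ := (Nat.modEq_iff_dvd' hlt.le).1 hmod
      have hx1 : x ≠ 0 := by rintro rfl; omega
      obtain ⟨x', rfl⟩ : ∃ x', x = x' + 1 := ⟨x - 1, by omega⟩
      have h9 : y * b = w + a * (x' + 1) := by omega
      refine ⟨x', a - 1 - y, ?_⟩
      obtain ⟨y', hy'⟩ : ∃ y', a - 1 - y = y' ∧ y + y' + 1 = a := ⟨a - 1 - y, rfl, by omega⟩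
      rw [hy'.1]
      have E1 : (y + y' + 1) * b = y * b + y' * b + b := by ring
      have E2 : (y + y' + 1) * b = a * b := by rw [hy'.2]
      have E4 : a * (x' + 1) = a * x' + a := by ring
      have E5 : x' * a = a * x' := by ring
      omega
  -- degree of P
  have hQne : Q ≠ 0 := hQmon.ne_zero
  have hRdeg : (Q.comp (X ^ w)).natDegree = n * w := by
    rw [Polynomial.natDegree_comp, hQdeg, Polynomial.natDegree_X_pow]
  have hRlc : (Q.comp (X ^ w)).leadingCoeff = 1 := by
    rw [Polynomial.leadingCoeff_comp (by rw [Polynomial.natDegree_X_pow]; omega),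
      hQmon.leadingCoeff, (Polynomial.monic_X_pow w).leadingCoeff]
    simp
  have hRne : Q.comp (X ^ w) ≠ 0 := by
    intro h
    rw [h, Polynomial.leadingCoeff_zero] at hRlc
    norm_num at hRlc
  have hPdeg : P.natDegree = (a * b + 1 - (a + b)) + n * w := by
    rw [hP, Polynomial.natDegree_mul hDne hRne, hDdeg, hRdeg]
  have hPlc : P.coeff P.natDegree = 1 := by
    have h1 : P.leadingCoeff = 1 := by
      rw [hP, Polynomial.leadingCoeff_mul, hDmon, hRlc, one_mul]
    exact h1
  obtain ⟨n', rfl⟩ : ∃ n', n = n' + 1 := ⟨n - 1, by omega⟩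
  have hnw : (n' + 1) * w = n' * w + w := by ring
  set mstar := a * b - a - b - w + (n' + 1) * w with hmstar
  set c := ∑ i ∈ range (n' + 2), Q.coeff i with hc
  -- head sum at the top degree
  have hHdP : ∑ j ∈ range (P.natDegree + 1), P.coeff j = c := by
    rw [hP, Hform D Q (n' + 1) w hQdeg _ (by rw [← hP, hPdeg]; omega)]
    apply Finset.sum_congr rfl
    intro i hi
    rw [Finset.mem_range] at hi
    have hiw : i * w ≤ (n' + 1) * w := Nat.mul_le_mul_right w (by omega)
    rw [show P.natDegree + 1 - i * w = (P.natDegree - i * w) + 1 by rw [hPdeg]; omega,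
      SD_eq_chi hb hba hcop D hD, chi_of, mul_one]
    apply sg_large hb hba hcop
    rw [hPdeg]
    omega
  -- head sum just below the top block
  have hHm : ∑ j ∈ range (mstar + 1), P.coeff j = c + 1 := by
    rw [hP, Hform D Q (n' + 1) w hQdeg _ (by omega)]
    rw [Finset.sum_range_succ, Finset.sum_range_succ]
    have hQtop : Q.coeff (n' + 1) = 1 := by
      have := hQmon.coeff_natDegree
      rwa [hQdeg] at this
    have hQsub : Q.coeff n' = -1 := by simpa using hQ
    have hmain : ∀ i ∈ range n',
        Q.coeff i * (∑ j ∈ range (mstar + 1 - i * w), D.coeff j) = Q.coeff i := by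
      intro i hi
      rw [Finset.mem_range] at hi
      have hiw : (i + 2) * w ≤ (n' + 1) * w := Nat.mul_le_mul_right w (by omega)
      have hiw2 : (i + 2) * w = i * w + 2 * w := by ring
      rw [show mstar + 1 - i * w = (mstar - i * w) + 1 by omega,
        SD_eq_chi hb hba hcop D hD, chi_of, mul_one]
      apply sg_large hb hba hcop
      omega
    rw [Finset.sum_congr rfl hmain]
    have e1 : mstar + 1 - (n' + 1) * w = (a * b - a - b - w) + 1 := by omega
    have e2 : mstar + 1 - n' * w = (a * b - a - b) + 1 := by omega
    rw [e1, e2, SD_eq_chi hb hba hcop D hD, SD_eq_chi hb hba hcop D hD,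
      chi_of _ _ _ hFwS, chi_of_not _ _ _ (sg_not_F hb hba hcop), hQtop, hQsub, hc,
      Finset.sum_range_succ, Finset.sum_range_succ, hQtop, hQsub]
    ring
  -- the alternating-sign invariant
  have hwdP : w + 1 ≤ P.natDegree := by rw [hPdeg]; omega
  obtain ⟨j, hj, hnz, hzero, hsum⟩ := tail01 P hcoeff halt hPlc w (by omega)
  have hsplit : mstar + 1 + (w + 1) = P.natDegree + 1 := by rw [hPdeg]; omega
  have hU : ∑ r ∈ range (w + 1), P.coeff (P.natDegree - r) = -1 := by
    have h1 : ∑ j ∈ range (P.natDegree + 1), P.coeff j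
        = ∑ j ∈ range (mstar + 1), P.coeff j
          + ∑ r ∈ range (w + 1), P.coeff (mstar + 1 + r) := by
      rw [show P.natDegree + 1 = (mstar + 1) + (w + 1) by omega, Finset.sum_range_add]
    have h2 : ∑ r ∈ range (w + 1), P.coeff (mstar + 1 + r)
        = ∑ r ∈ range (w + 1), P.coeff (P.natDegree - r) := by
      rw [← Finset.sum_range_reflect (fun r => P.coeff (mstar + 1 + r)) (w + 1)]
      apply Finset.sum_congr rfl
      intro r hr
      rw [Finset.mem_range] at hr
      congr 1
      omega
    rw [hHdP, hHm, h2] at h1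
    linarith
  rw [hsum] at hU
  split_ifs at hU <;> norm_num at hU
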